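/- For each (I,J) ∈ O, the subspace A_{I,J} of ℝ^{n−1} is homeomorphic to ℝ^{n−1} (equivalently, to the open cube Int(D^{n−1}) = (−1,1)^{n−1}). -/

import Mathlib

open Finset

/-- The maximum of `|z i - z j|` over `j ∈ S`, with the convention `max ∅ = 0`. -/
noncomputable def maxDist {n : ℕ} (z : Fin n → ℝ) (i : Fin n) (S : Finset (Fin n)) : ℝ :=
  if h : S.Nonempty then S.sup' h (fun j => |z i - z j|) else 0

/-- `ν^z_{I,i}`: the minimum over all subsets `S ⊆ I \ {i}` with `|S| = ⌊n/3⌋` of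
`max_{j ∈ S} |z i - z j|`, with the convention `min ∅ = 0`. -/
noncomputable def nu (n : ℕ) (z : Fin n → ℝ) (I : Finset (Fin n)) (i : Fin n) : ℝ :=
  if h : ((I.erase i).powersetCard (n / 3)).Nonempty then
    ((I.erase i).powersetCard (n / 3)).inf' h (maxDist z i)
  else 0

/-- `ν^z_I = max_{i ∈ I} ν^z_{I,i}`, with the convention `max ∅ = 0`. -/
noncomputable def nuMax (n : ℕ) (z : Fin n → ℝ) (I : Finset (Fin n)) : ℝ :=
  if h : I.Nonempty then I.sup' h (nu n z I) else 0

/-- `δ^z = (max{t₁,…,tₙ} - min{t₁,…,tₙ}) / n`. -/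
noncomputable def delta (n : ℕ) (z : Fin n → ℝ) : ℝ :=
  if h : (Finset.univ : Finset (Fin n)).Nonempty then
    (Finset.univ.sup' h z - Finset.univ.inf' h z) / n
  else 0

/-- `ẏ = (t₁, …, t_{n-1}, 0) ∈ ℝⁿ` for `y = (t₁, …, t_{n-1}) ∈ ℝ^{n-1}`. -/
def ydot (n : ℕ) (y : Fin (n - 1) → ℝ) : Fin n → ℝ :=
  fun i => if h : (i : ℕ) < n - 1 then y ⟨i, h⟩ else 0

/-- The open cube `(-1, 1)^m`, the interior of `D^m = [-1,1]^m`. -/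
def IntD (m : ℕ) : Set (Fin m → ℝ) := {y | ∀ i, y i ∈ Set.Ioo (-1 : ℝ) 1}

/-- `(I, J) ∈ O`: `I` and `J` are disjoint nonempty subsets of `[n]` with `I ∪ J = [n]`,
`|I| > n/3`, and `|J| > n/3`. -/
def memO (n : ℕ) (I J : Finset (Fin n)) : Prop :=
  I.Nonempty ∧ J.Nonempty ∧ Disjoint I J ∧ I ∪ J = Finset.univ ∧
    (n : ℝ) < 3 * I.card ∧ (n : ℝ) < 3 * J.card

/-- The set `A_{I,J}`. -/
def setAIJ (n : ℕ) (I J : Finset (Fin n)) : Set (Fin (n - 1) → ℝ) :=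
  {y | y ∈ IntD (n - 1) ∧ ∀ i ∈ I, ∀ j ∈ J,
    delta n (ydot n y) < ydot n y j - ydot n y i ∧
    nu n (ydot n y) I i < delta n (ydot n y) ∧
    nu n (ydot n y) J j < delta n (ydot n y)}

/-- The set `A = { y ∈ Int(D^{n-1}) : ν^{ẏ}_{[n]} < δ^{ẏ} }`. -/
def setA (n : ℕ) : Set (Fin (n - 1) → ℝ) :=
  {y | y ∈ IntD (n - 1) ∧ nuMax n (ydot n y) Finset.univ < delta n (ydot n y)}

/-- The point `b ∈ ℝ^{n-1}` associated to `(I, J) ∈ O`: if `n ∈ J` then `b_i = -1/2` for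
`i ∈ I` and `b_j = 0` for `j ∈ J \ {n}`; if `n ∈ I` then `b_i = 0` for `i ∈ I \ {n}` and
`b_j = 1/2` for `j ∈ J`. -/
noncomputable def bpt (n : ℕ) (I J : Finset (Fin n)) : Fin (n - 1) → ℝ :=
  fun i =>
    if (⟨n - 1, by have := i.isLt; omega⟩ : Fin n) ∈ J then
      (if Fin.castLE (Nat.sub_le n 1) i ∈ I then -(1 / 2 : ℝ) else 0)
    else
      (if Fin.castLE (Nat.sub_le n 1) i ∈ I then 0 else (1 / 2 : ℝ))

namespace Stmt5

theorem cont_sup' {α : Type*} [TopologicalSpace α] {ι : Type*} (s : Finset ι) (hs : s.Nonempty)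
    (f : ι → α → ℝ) (hf : ∀ i, Continuous (f i)) :
    Continuous (fun x => s.sup' hs (fun i => f i x)) := by
  induction hs using Finset.Nonempty.cons_induction with
  | singleton i => simpa using hf i
  | cons i s hi hs ih =>
      simp only [Finset.sup'_cons hs]
      exact (hf i).max ih

theorem cont_inf' {α : Type*} [TopologicalSpace α] {ι : Type*} (s : Finset ι) (hs : s.Nonempty)
    (f : ι → α → ℝ) (hf : ∀ i, Continuous (f i)) :
    Continuous (fun x => s.inf' hs (fun i => f i x)) := by
  induction hs using Finset.Nonempty.cons_induction with
  | singleton i => simpa using hf i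
  | cons i s hi hs ih =>
      simp only [Finset.inf'_cons hs]
      exact (hf i).min ih

theorem continuous_delta (n : ℕ) : Continuous (delta n) := by
  unfold delta
  rcases em (Finset.univ : Finset (Fin n)).Nonempty with h | h
  · simp only [dif_pos h]
    exact ((cont_sup' _ h (fun i (z : Fin n → ℝ) => z i) (fun i => continuous_apply i)).sub
      (cont_inf' _ h (fun i (z : Fin n → ℝ) => z i) (fun i => continuous_apply i))).div_const _
  · simp only [dif_neg h]; exact continuous_const

theorem continuous_maxDist {n : ℕ} (i : Fin n) (S : Finset (Fin n)) :
    Continuous (fun z : Fin n → ℝ => maxDist z i S) := by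
  rcases em S.Nonempty with h | h
  · simp only [maxDist, h, reduceDIte]
    exact cont_sup' _ h (fun j (z : Fin n → ℝ) => |z i - z j|)
      (fun j => ((continuous_apply i).sub (continuous_apply j)).abs)
  · simp only [maxDist, h, reduceDIte]; exact continuous_const

theorem continuous_nu (n : ℕ) (I : Finset (Fin n)) (i : Fin n) :
    Continuous (fun z => nu n z I i) := by
  rcases em ((I.erase i).powersetCard (n / 3)).Nonempty with h | h
  · simp only [nu, h, reduceDIte]
    exact cont_inf' _ h (fun S (z : Fin n → ℝ) => maxDist z i S) (fun S => continuous_maxDist i S)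
  · simp only [nu, h, reduceDIte]; exact continuous_const

theorem continuous_ydot (n : ℕ) : Continuous (ydot n) := by
  apply continuous_pi
  intro i
  rcases em ((i : ℕ) < n - 1) with h | h
  · simp only [ydot, h, reduceDIte]; exact continuous_apply _
  · simp only [ydot, h, reduceDIte]; exact continuous_const

theorem ydot_smul (n : ℕ) (c : ℝ) (y : Fin (n-1) → ℝ) :
    ydot n (c • y) = c • ydot n y := by
  funext i
  rcases em ((i : ℕ) < n - 1) with h | h <;>
    simp [ydot, h]

theorem ydot_add_smul (n : ℕ) (x y : Fin (n-1) → ℝ) (c : ℝ) :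
    ydot n (x + c • y) = ydot n x + c • ydot n y := by
  funext i
  rcases em ((i : ℕ) < n - 1) with h | h <;>
    simp [ydot, h]

theorem delta_smul (n : ℕ) (c : ℝ) (hc : 0 ≤ c) (z : Fin n → ℝ) :
    delta n (c • z) = c * delta n z := by
  rcases em (Finset.univ : Finset (Fin n)).Nonempty with h | h
  · simp only [delta, h, reduceDIte]
    have hs : (Finset.univ : Finset (Fin n)).sup' h (c • z) =
        c * Finset.univ.sup' h z := by
      rw [comp_sup'_eq_sup'_comp h (c * ·) (fun x y => mul_max_of_nonneg x y hc)]
      rfl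
    have hi : (Finset.univ : Finset (Fin n)).inf' h (c • z) =
        c * Finset.univ.inf' h z := by
      rw [apply_inf'_eq_inf'_comp h (c * ·) (fun x y => mul_min_of_nonneg x y hc)]
      rfl
    rw [hs, hi]; ring
  · simp only [delta, h, reduceDIte, mul_zero]

theorem maxDist_smul {n : ℕ} (c : ℝ) (hc : 0 ≤ c) (z : Fin n → ℝ) (i : Fin n)
    (S : Finset (Fin n)) : maxDist (c • z) i S = c * maxDist z i S := by
  rcases em S.Nonempty with h | h
  · simp only [maxDist, h, reduceDIte]
    rw [comp_sup'_eq_sup'_comp h (c * ·) (fun x y => mul_max_of_nonneg x y hc)]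
    apply Finset.sup'_congr h rfl
    intro j _
    simp only [Pi.smul_apply, smul_eq_mul, Function.comp]
    rw [← mul_sub, abs_mul, abs_of_nonneg hc]
  · simp only [maxDist, h, reduceDIte, mul_zero]

theorem nu_smul (n : ℕ) (c : ℝ) (hc : 0 ≤ c) (z : Fin n → ℝ) (I : Finset (Fin n)) (i : Fin n) :
    nu n (c • z) I i = c * nu n z I i := by
  rcases em ((I.erase i).powersetCard (n / 3)).Nonempty with h | h
  · simp only [nu, h, reduceDIte]
    rw [apply_inf'_eq_inf'_comp h (c * ·) (fun x y => mul_min_of_nonneg x y hc)]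
    apply Finset.inf'_congr h rfl
    intro S _
    exact maxDist_smul c hc z i S
  · simp only [nu, h, reduceDIte, mul_zero]

end Stmt5
namespace Stmt5

/-- The cone `C`: the conditions of `A_{I,J}` without the cube restriction. -/
def setC (n : ℕ) (I J : Finset (Fin n)) : Set (Fin (n - 1) → ℝ) :=
  {y | ∀ i ∈ I, ∀ j ∈ J,
    delta n (ydot n y) < ydot n y j - ydot n y i ∧
    nu n (ydot n y) I i < delta n (ydot n y) ∧
    nu n (ydot n y) J j < delta n (ydot n y)}

/-- The weak closure conditions. -/
def setW (n : ℕ) (I J : Finset (Fin n)) : Set (Fin (n - 1) → ℝ) :=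
  {y | ∀ i ∈ I, ∀ j ∈ J,
    delta n (ydot n y) ≤ ydot n y j - ydot n y i ∧
    nu n (ydot n y) I i ≤ delta n (ydot n y) ∧
    nu n (ydot n y) J j ≤ delta n (ydot n y)}

theorem setAIJ_eq (n : ℕ) (I J : Finset (Fin n)) :
    setAIJ n I J = setC n I J ∩ IntD (n - 1) :=
  Set.ext fun _ => ⟨fun h => ⟨h.2, h.1⟩, fun h => ⟨h.2, h.1⟩⟩

theorem isOpen_setC (n : ℕ) (I J : Finset (Fin n)) : IsOpen (setC n I J) := by
  have hd : Continuous (fun y => delta n (ydot n y)) :=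
    (continuous_delta n).comp (continuous_ydot n)
  have happ : ∀ a : Fin n, Continuous (fun y => ydot n y a) :=
    fun a => (continuous_apply a).comp (continuous_ydot n)
  have hnu : ∀ (K : Finset (Fin n)) (a : Fin n), Continuous (fun y => nu n (ydot n y) K a) :=
    fun K a => (continuous_nu n K a).comp (continuous_ydot n)
  have : setC n I J = ⋂ i ∈ I, ⋂ j ∈ J,
      ({y | delta n (ydot n y) < ydot n y j - ydot n y i} ∩
       ({y | nu n (ydot n y) I i < delta n (ydot n y)} ∩
        {y | nu n (ydot n y) J j < delta n (ydot n y)})) := by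
    ext y
    simp only [setC, Set.mem_iInter, Set.mem_inter_iff, Set.mem_setOf_eq]
  rw [this]
  refine isOpen_biInter_finset fun i _ => isOpen_biInter_finset fun j _ => ?_
  exact (isOpen_lt hd ((happ j).sub (happ i))).inter
    ((isOpen_lt (hnu I i) hd).inter (isOpen_lt (hnu J j) hd))

theorem isClosed_setW (n : ℕ) (I J : Finset (Fin n)) : IsClosed (setW n I J) := by
  have hd : Continuous (fun y => delta n (ydot n y)) :=
    (continuous_delta n).comp (continuous_ydot n)
  have happ : ∀ a : Fin n, Continuous (fun y => ydot n y a) :=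
    fun a => (continuous_apply a).comp (continuous_ydot n)
  have hnu : ∀ (K : Finset (Fin n)) (a : Fin n), Continuous (fun y => nu n (ydot n y) K a) :=
    fun K a => (continuous_nu n K a).comp (continuous_ydot n)
  have : setW n I J = ⋂ i ∈ I, ⋂ j ∈ J,
      ({y | delta n (ydot n y) ≤ ydot n y j - ydot n y i} ∩
       ({y | nu n (ydot n y) I i ≤ delta n (ydot n y)} ∩
        {y | nu n (ydot n y) J j ≤ delta n (ydot n y)})) := by
    ext y
    simp only [setW, Set.mem_iInter, Set.mem_inter_iff, Set.mem_setOf_eq]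
  rw [this]
  refine isClosed_biInter fun i _ => isClosed_biInter fun j _ => ?_
  exact (isClosed_le hd ((happ j).sub (happ i))).inter
    ((isClosed_le (hnu I i) hd).inter (isClosed_le (hnu J j) hd))

theorem closure_setC_subset (n : ℕ) (I J : Finset (Fin n)) :
    closure (setC n I J) ⊆ setW n I J := by
  apply closure_minimal _ (isClosed_setW n I J)
  intro y hy i hi j hj
  obtain ⟨a, b, c⟩ := hy i hi j hj
  exact ⟨a.le, b.le, c.le⟩

theorem smul_mem_setC {n : ℕ} {I J : Finset (Fin n)} {c : ℝ} (hc : 0 < c)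
    {y : Fin (n - 1) → ℝ} (hy : y ∈ setC n I J) : c • y ∈ setC n I J := by
  intro i hi j hj
  obtain ⟨h1, h2, h3⟩ := hy i hi j hj
  have hys : ydot n (c • y) = c • ydot n y := ydot_smul n c y
  rw [hys, delta_smul n c hc.le, nu_smul n c hc.le, nu_smul n c hc.le]
  simp only [Pi.smul_apply, smul_eq_mul]
  refine ⟨?_, ?_, ?_⟩
  · rw [← mul_sub]; exact mul_lt_mul_of_pos_left h1 hc
  · exact mul_lt_mul_of_pos_left h2 hc
  · exact mul_lt_mul_of_pos_left h3 hc

theorem sup'_split (n : ℕ) (I J : Finset (Fin n)) (hI : I.Nonempty) (hJ : J.Nonempty)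
    (hU : I ∪ J = Finset.univ) (z : Fin n → ℝ)
    (hsep : ∀ i ∈ I, ∀ j ∈ J, z i ≤ z j) (h : (Finset.univ : Finset (Fin n)).Nonempty) :
    Finset.univ.sup' h z = J.sup' hJ z ∧ Finset.univ.inf' h z = I.inf' hI z := by
  constructor
  · apply le_antisymm
    · apply Finset.sup'_le
      intro a _
      by_cases haI : a ∈ I
      · obtain ⟨j, hj⟩ := hJ
        exact le_trans (hsep a haI j hj) (Finset.le_sup' z hj)
      · have haJ : a ∈ J := by
          have := Finset.mem_univ a
          rw [← hU, Finset.mem_union] at this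
          tauto
        exact Finset.le_sup' z haJ
    · apply Finset.sup'_le
      intro j _
      exact Finset.le_sup' z (Finset.mem_univ j)
  · apply le_antisymm
    · apply Finset.le_inf'
      intro i _
      exact Finset.inf'_le z (Finset.mem_univ i)
    · apply Finset.le_inf'
      intro a _
      by_cases haI : a ∈ I
      · exact Finset.inf'_le z haI
      · have haJ : a ∈ J := by
          have := Finset.mem_univ a
          rw [← hU, Finset.mem_union] at this
          tauto
        obtain ⟨i, hi⟩ := hI
        exact le_trans (Finset.inf'_le z hi) (hsep i hi a haJ)

theorem delta_nonneg (n : ℕ) (z : Fin n → ℝ) : 0 ≤ delta n z := by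
  unfold delta
  rcases em (Finset.univ : Finset (Fin n)).Nonempty with h | h
  · rw [dif_pos h]
    obtain ⟨a, ha⟩ := h
    apply div_nonneg _ (Nat.cast_nonneg n)
    have := le_trans (Finset.inf'_le z ha) (Finset.le_sup' z ha)
    linarith
  · rw [dif_neg h]

theorem nu_shift {n : ℕ} (K : Finset (Fin n)) (i : Fin n) (hi : i ∈ K) (z z' : Fin n → ℝ)
    (d : ℝ) (h : ∀ a ∈ K, z' a = z a + d) : nu n z' K i = nu n z K i := by
  rcases em ((K.erase i).powersetCard (n / 3)).Nonempty with hne | hne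
  · simp only [nu, hne, reduceDIte]
    apply Finset.inf'_congr hne rfl
    intro S hS
    obtain ⟨hsub, -⟩ := Finset.mem_powersetCard.mp hS
    rcases em S.Nonempty with hS2 | hS2
    · simp only [maxDist, hS2, reduceDIte]
      apply Finset.sup'_congr hS2 rfl
      intro a haS
      have haK : a ∈ K := Finset.mem_of_mem_erase (hsub haS)
      rw [h a haK, h i hi]
      congr 1
      ring
    · simp only [maxDist, hS2, reduceDIte]
  · simp only [nu, hne, reduceDIte]

end Stmt5
namespace Stmt5

theorem ydot_bpt (n : ℕ) (I J : Finset (Fin n)) (hn : 2 ≤ n) (hIJ : memO n I J) :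
    ∃ cI cJ : ℝ, cJ - cI = 1 / 2 ∧ cI ≤ cJ ∧
      ydot n (bpt n I J) = fun a => if a ∈ I then cI else cJ := by
  obtain ⟨hI, hJ, hdisj, hU, -, -⟩ := hIJ
  have hlast : ∀ (h : n - 1 < n), (⟨n - 1, h⟩ : Fin n) ∈ J ∨ (⟨n - 1, h⟩ : Fin n) ∈ I := by
    intro h
    have := Finset.mem_univ (⟨n - 1, h⟩ : Fin n)
    rw [← hU, Finset.mem_union] at this
    tauto
  have hnlt : n - 1 < n := by omega
  by_cases hl : (⟨n - 1, hnlt⟩ : Fin n) ∈ J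
  · refine ⟨-(1 / 2), 0, by norm_num, by norm_num, ?_⟩
    funext a
    by_cases ha : (a : ℕ) < n - 1
    · have hcast : (Fin.castLE (Nat.sub_le n 1) (⟨(a : ℕ), ha⟩ : Fin (n - 1))) = a :=
        Fin.ext rfl
      simp only [ydot, ha, reduceDIte, bpt]
      rw [if_pos hl, hcast]
    · have haeq : a = ⟨n - 1, hnlt⟩ := Fin.ext (by have := a.isLt; simp; omega)
      have haI : a ∉ I := by
        rw [haeq]; exact Finset.disjoint_right.mp hdisj hl
      simp only [ydot, ha, reduceDIte, if_neg haI]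
  · have hlI : (⟨n - 1, hnlt⟩ : Fin n) ∈ I := (hlast hnlt).resolve_left hl
    refine ⟨0, 1 / 2, by norm_num, by norm_num, ?_⟩
    funext a
    by_cases ha : (a : ℕ) < n - 1
    · have hcast : (Fin.castLE (Nat.sub_le n 1) (⟨(a : ℕ), ha⟩ : Fin (n - 1))) = a :=
        Fin.ext rfl
      simp only [ydot, ha, reduceDIte, bpt]
      rw [if_neg hl, hcast]
    · have haeq : a = ⟨n - 1, hnlt⟩ := Fin.ext (by have := a.isLt; simp; omega)
      have haI : a ∈ I := by rw [haeq]; exact hlI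
      simp only [ydot, ha, reduceDIte, if_pos haI]

theorem erase_card_ge {n : ℕ} {K : Finset (Fin n)} {i : Fin n} (hi : i ∈ K)
    (hcard : (n : ℝ) < 3 * K.card) : n / 3 ≤ (K.erase i).card := by
  have h1 : n < 3 * K.card := by exact_mod_cast hcard
  have h2 : n / 3 < K.card := by omega
  rw [Finset.card_erase_of_mem hi]
  omega

theorem nu_zero {n : ℕ} {K : Finset (Fin n)} {i : Fin n} (hi : i ∈ K)
    (hcard : n / 3 ≤ (K.erase i).card) {z : Fin n → ℝ} {c : ℝ}
    (hzc : ∀ a ∈ K, z a = c) : nu n z K i = 0 := by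
  have hne : ((K.erase i).powersetCard (n / 3)).Nonempty :=
    Finset.powersetCard_nonempty.mpr hcard
  simp only [nu, hne, reduceDIte]
  have : ∀ S ∈ (K.erase i).powersetCard (n / 3), maxDist z i S = 0 := by
    intro S hS
    obtain ⟨hsub, -⟩ := Finset.mem_powersetCard.mp hS
    rcases em S.Nonempty with hS2 | hS2
    · simp only [maxDist, hS2, reduceDIte]
      have : ∀ a ∈ S, |z i - z a| = 0 := by
        intro a haS
        have haK : a ∈ K := Finset.mem_of_mem_erase (hsub haS)
        rw [hzc a haK, hzc i hi]
        simp
      rw [Finset.sup'_congr hS2 rfl this, Finset.sup'_const]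
    · simp only [maxDist, hS2, reduceDIte]
  rw [Finset.inf'_congr hne rfl this, Finset.inf'_const]

theorem bpt_mem (n : ℕ) (I J : Finset (Fin n)) (hn : 2 ≤ n) (hIJ : memO n I J) :
    bpt n I J ∈ setC n I J := by
  obtain ⟨cI, cJ, hc, hcle, hb⟩ := ydot_bpt n I J hn hIJ
  obtain ⟨hI, hJ, hdisj, hU, hcardI, hcardJ⟩ := hIJ
  have huniv : (Finset.univ : Finset (Fin n)).Nonempty := ⟨⟨0, by omega⟩, Finset.mem_univ _⟩
  have hb' : ∀ a, ydot n (bpt n I J) a = if a ∈ I then cI else cJ := fun a => by rw [hb]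
  have hzI : ∀ a ∈ I, ydot n (bpt n I J) a = cI := by intro a ha; rw [hb' a, if_pos ha]
  have hzJ : ∀ a ∈ J, ydot n (bpt n I J) a = cJ := by
    intro a ha
    rw [hb' a, if_neg (Finset.disjoint_right.mp hdisj ha)]
  have hsep : ∀ i ∈ I, ∀ j ∈ J, ydot n (bpt n I J) i ≤ ydot n (bpt n I J) j := by
    intro i hi j hj; rw [hzI i hi, hzJ j hj]; exact hcle
  obtain ⟨hsu, hiu⟩ := sup'_split n I J hI hJ hU (ydot n (bpt n I J)) hsep huniv
  have hsupc : J.sup' hJ (ydot n (bpt n I J)) = cJ := by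
    rw [Finset.sup'_congr hJ rfl hzJ, Finset.sup'_const]
  have hinfc : I.inf' hI (ydot n (bpt n I J)) = cI := by
    rw [Finset.inf'_congr hI rfl hzI, Finset.inf'_const]
  have hdelta : delta n (ydot n (bpt n I J)) = 1 / (2 * n) := by
    unfold delta
    rw [dif_pos huniv, hsu, hiu, hsupc, hinfc, hc]
    have hn0 : (0 : ℝ) < n := by exact_mod_cast (by omega : 0 < n)
    field_simp
  have hnR : (2 : ℝ) ≤ n := by exact_mod_cast hn
  have hdpos : 0 < delta n (ydot n (bpt n I J)) := by rw [hdelta]; positivity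
  intro i hi j hj
  refine ⟨?_, ?_, ?_⟩
  · rw [hzI i hi, hzJ j hj, hdelta]
    rw [hc, div_lt_div_iff₀ (by linarith) (by norm_num : (0:ℝ) < 2)]
    nlinarith
  · rw [nu_zero hi (erase_card_ge hi hcardI) hzI]
    exact hdpos
  · rw [nu_zero hj (erase_card_ge hj hcardJ) hzJ]
    exact hdpos

end Stmt5
namespace Stmt5

theorem shift_mem (n : ℕ) (I J : Finset (Fin n)) (hn : 2 ≤ n) (hIJ : memO n I J)
    {x : Fin (n - 1) → ℝ} (hx : x ∈ setW n I J) {ε : ℝ} (hε : 0 < ε) :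
    x + ε • bpt n I J ∈ setC n I J := by
  obtain ⟨cI, cJ, hc, hcle, hb⟩ := ydot_bpt n I J hn hIJ
  obtain ⟨hI, hJ, hdisj, hU, hcardI, hcardJ⟩ := hIJ
  have huniv : (Finset.univ : Finset (Fin n)).Nonempty := ⟨⟨0, by omega⟩, Finset.mem_univ _⟩
  have hnR : (2 : ℝ) ≤ n := by exact_mod_cast hn
  have hn0 : (0 : ℝ) < n := by linarith
  have hkey : ydot n (x + ε • bpt n I J) =
      fun a => ydot n x a + ε * (if a ∈ I then cI else cJ) := by
    rw [ydot_add_smul, hb]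
    funext a
    simp
  have hz'I : ∀ a ∈ I, ydot n (x + ε • bpt n I J) a = ydot n x a + ε * cI := by
    intro a ha; rw [hkey]; simp [ha]
  have hz'J : ∀ a ∈ J, ydot n (x + ε • bpt n I J) a = ydot n x a + ε * cJ := by
    intro a ha
    have haI : a ∉ I := Finset.disjoint_right.mp hdisj ha
    rw [hkey]; simp [haI]
  have hd0 : 0 ≤ delta n (ydot n x) := delta_nonneg n _
  have hsep : ∀ i ∈ I, ∀ j ∈ J, ydot n x i ≤ ydot n x j := by
    intro i hi j hj
    have := (hx i hi j hj).1
    linarith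
  have hsep' : ∀ i ∈ I, ∀ j ∈ J,
      ydot n (x + ε • bpt n I J) i ≤ ydot n (x + ε • bpt n I J) j := by
    intro i hi j hj
    rw [hz'I i hi, hz'J j hj]
    have := hsep i hi j hj
    nlinarith
  obtain ⟨hsu, hiu⟩ := sup'_split n I J hI hJ hU (ydot n x) hsep huniv
  obtain ⟨hsu', hiu'⟩ := sup'_split n I J hI hJ hU (ydot n (x + ε • bpt n I J)) hsep' huniv
  have h1 : J.sup' hJ (ydot n (x + ε • bpt n I J)) = J.sup' hJ (ydot n x) + ε * cJ := by
    rw [Finset.sup'_congr hJ rfl hz'J]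
    exact (comp_sup'_eq_sup'_comp hJ (· + ε * cJ) (fun a b => (max_add_add_right a b _).symm)).symm
  have h2 : I.inf' hI (ydot n (x + ε • bpt n I J)) = I.inf' hI (ydot n x) + ε * cI := by
    rw [Finset.inf'_congr hI rfl hz'I]
    exact (apply_inf'_eq_inf'_comp hI (· + ε * cI) (fun a b => (min_add_add_right a b _).symm)).symm
  have hdelta' : delta n (ydot n (x + ε • bpt n I J)) =
      delta n (ydot n x) + ε / (2 * n) := by
    unfold delta
    rw [dif_pos huniv, dif_pos huniv, hsu, hiu, hsu', hiu', h1, h2]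
    rw [show J.sup' hJ (ydot n x) + ε * cJ - (I.inf' hI (ydot n x) + ε * cI)
        = (J.sup' hJ (ydot n x) - I.inf' hI (ydot n x)) + ε / 2 from by linear_combination ε * hc,
      add_div, div_div]
  intro i hi j hj
  obtain ⟨w1, w2, w3⟩ := hx i hi j hj
  have hquarter : ε / (2 * n) < ε / 2 := by
    rw [div_lt_div_iff₀ (by linarith) (by norm_num : (0:ℝ) < 2)]
    nlinarith
  refine ⟨?_, ?_, ?_⟩
  · rw [hdelta', hz'I i hi, hz'J j hj]
    nlinarith [hc]
  · rw [nu_shift I i hi (ydot n x) _ (ε * cI) hz'I, hdelta']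
    have : 0 < ε / (2 * n) := by positivity
    linarith
  · rw [nu_shift J j hj (ydot n x) _ (ε * cJ) hz'J, hdelta']
    have : 0 < ε / (2 * n) := by positivity
    linarith

end Stmt5
namespace Stmt5

theorem setC_subset_setW (n : ℕ) (I J : Finset (Fin n)) : setC n I J ⊆ setW n I J := by
  intro y hy i hi j hj
  obtain ⟨a, b, c⟩ := hy i hi j hj
  exact ⟨a.le, b.le, c.le⟩

theorem sig_set_nonempty (n : ℕ) (I J : Finset (Fin n)) (hn : 2 ≤ n) (hIJ : memO n I J)
    (y : Fin (n - 1) → ℝ) : {s : ℝ | y + s • bpt n I J ∈ setC n I J}.Nonempty := by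
  obtain ⟨r, hr, hball⟩ := Metric.isOpen_iff.mp (isOpen_setC n I J) _ (bpt_mem n I J hn hIJ)
  set s : ℝ := ‖y‖ / r + 1 with hs
  have spos : 0 < s := by positivity
  have hmem : bpt n I J + s⁻¹ • y ∈ Metric.ball (bpt n I J) r := by
    rw [Metric.mem_ball, dist_eq_norm, add_sub_cancel_left, norm_smul, norm_inv,
      Real.norm_eq_abs, abs_of_pos spos, inv_mul_lt_iff₀ spos]
    have : ‖y‖ / r < s := by rw [hs]; linarith
    calc ‖y‖ < (‖y‖ / r) * r + r := by
          rw [div_mul_cancel₀ _ hr.ne']; linarith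
      _ ≤ s * r := by nlinarith
  refine ⟨s, ?_⟩
  have := smul_mem_setC spos (hball hmem)
  have heq : s • (bpt n I J + s⁻¹ • y) = y + s • bpt n I J := by
    rw [smul_add, smul_smul, mul_inv_cancel₀ spos.ne', one_smul, add_comm]
  rwa [heq] at this

theorem f_add (n : ℕ) (I J : Finset (Fin n)) (hn : 2 ≤ n) (hIJ : memO n I J)
    {i0 j0 : Fin n} (hi0 : i0 ∈ I) (hj0 : j0 ∈ J) (y : Fin (n - 1) → ℝ) (s : ℝ) :
    2 * (ydot n (y + s • bpt n I J) j0 - ydot n (y + s • bpt n I J) i0) =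
      2 * (ydot n y j0 - ydot n y i0) + s := by
  obtain ⟨cI, cJ, hc, hcle, hb⟩ := ydot_bpt n I J hn hIJ
  have hj0I : j0 ∉ I := Finset.disjoint_right.mp hIJ.2.2.1 hj0
  rw [ydot_add_smul, hb]
  simp only [Pi.add_apply, Pi.smul_apply, smul_eq_mul, if_pos hi0, if_neg hj0I]
  linear_combination 2 * s * hc

theorem f_pos (n : ℕ) (I J : Finset (Fin n)) {i0 j0 : Fin n} (hi0 : i0 ∈ I) (hj0 : j0 ∈ J)
    {y : Fin (n - 1) → ℝ} (hy : y ∈ setC n I J) :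
    0 < 2 * (ydot n y j0 - ydot n y i0) := by
  have h1 := (hy i0 hi0 j0 hj0).1
  have h0 := delta_nonneg n (ydot n y)
  linarith

theorem sig_set_bddBelow (n : ℕ) (I J : Finset (Fin n)) (hn : 2 ≤ n) (hIJ : memO n I J)
    (y : Fin (n - 1) → ℝ) : BddBelow {s : ℝ | y + s • bpt n I J ∈ setC n I J} := by
  obtain ⟨i0, hi0⟩ := hIJ.1
  obtain ⟨j0, hj0⟩ := hIJ.2.1
  refine ⟨-(2 * (ydot n y j0 - ydot n y i0)), ?_⟩
  intro s hs
  have := f_pos n I J hi0 hj0 hs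
  rw [f_add n I J hn hIJ hi0 hj0 y s] at this
  linarith

/-- `σ y`: the infimum of the fiber of the cone over `y` in direction `bpt`. -/
noncomputable def sig (n : ℕ) (I J : Finset (Fin n)) (y : Fin (n - 1) → ℝ) : ℝ :=
  sInf {s : ℝ | y + s • bpt n I J ∈ setC n I J}

theorem sig_lt_iff (n : ℕ) (I J : Finset (Fin n)) (hn : 2 ≤ n) (hIJ : memO n I J)
    (y : Fin (n - 1) → ℝ) (s : ℝ) :
    y + s • bpt n I J ∈ setC n I J ↔ sig n I J y < s := by
  constructor
  · intro h
    have hP : IsOpen ((fun t : ℝ => y + t • bpt n I J) ⁻¹' setC n I J) :=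
      (isOpen_setC n I J).preimage (continuous_const.add (continuous_id.smul continuous_const))
    obtain ⟨r, hr, hball⟩ := Metric.isOpen_iff.mp hP s h
    have hmem : s - r / 2 ∈ {t : ℝ | y + t • bpt n I J ∈ setC n I J} := by
      apply hball
      rw [Metric.mem_ball, Real.dist_eq]
      rw [abs_of_nonpos (by linarith)]
      linarith
    have := csInf_le (sig_set_bddBelow n I J hn hIJ y) hmem
    calc sig n I J y ≤ s - r / 2 := this
      _ < s := by linarith
  · intro h
    obtain ⟨s0, hs0, hlt⟩ := exists_lt_of_csInf_lt (sig_set_nonempty n I J hn hIJ y) h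
    have heq : y + s • bpt n I J = (y + s0 • bpt n I J) + (s - s0) • bpt n I J := by
      rw [add_assoc, ← add_smul]
      congr 2
      ring
    rw [heq]
    exact shift_mem n I J hn hIJ (setC_subset_setW n I J hs0) (by linarith)

theorem mem_setC_iff_sig_neg (n : ℕ) (I J : Finset (Fin n)) (hn : 2 ≤ n) (hIJ : memO n I J)
    (y : Fin (n - 1) → ℝ) : y ∈ setC n I J ↔ sig n I J y < 0 := by
  have := sig_lt_iff n I J hn hIJ y 0
  rwa [zero_smul, add_zero] at this

theorem sig_translate (n : ℕ) (I J : Finset (Fin n)) (hn : 2 ≤ n) (hIJ : memO n I J)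
    (y : Fin (n - 1) → ℝ) (t : ℝ) :
    sig n I J (y + t • bpt n I J) = sig n I J y - t := by
  have key : ∀ s : ℝ, sig n I J (y + t • bpt n I J) < s ↔ sig n I J y - t < s := by
    intro s
    rw [← sig_lt_iff n I J hn hIJ _ s]
    have heq : (y + t • bpt n I J) + s • bpt n I J = y + (t + s) • bpt n I J := by
      rw [add_assoc, ← add_smul]
    rw [heq, sig_lt_iff n I J hn hIJ y (t + s)]
    constructor <;> intro <;> linarith
  have h1 : ¬ (sig n I J y - t < sig n I J (y + t • bpt n I J)) := by
    intro h
    exact lt_irrefl _ ((key _).mpr h)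
  have h2 : ¬ (sig n I J (y + t • bpt n I J) < sig n I J y - t) := by
    intro h
    exact lt_irrefl _ ((key _).mp h)
  linarith

theorem sig_continuous (n : ℕ) (I J : Finset (Fin n)) (hn : 2 ≤ n) (hIJ : memO n I J) :
    Continuous (sig n I J) := by
  rw [Metric.continuous_iff]
  intro y ε hε
  -- upper bound neighborhood
  have hmem1 : y + (sig n I J y + ε / 2) • bpt n I J ∈ setC n I J :=
    (sig_lt_iff n I J hn hIJ y _).mpr (by linarith)
  have hP1 : IsOpen ((fun w : Fin (n-1) → ℝ => w + (sig n I J y + ε / 2) • bpt n I J) ⁻¹'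
      setC n I J) :=
    (isOpen_setC n I J).preimage (continuous_id.add continuous_const)
  obtain ⟨r1, hr1, hball1⟩ := Metric.isOpen_iff.mp hP1 y hmem1
  -- lower bound neighborhood
  have hnotmem : y + (sig n I J y - ε / 2) • bpt n I J ∉ closure (setC n I J) := by
    intro hmem
    have := shift_mem n I J hn hIJ (closure_setC_subset n I J hmem) (show (0:ℝ) < ε/4 by linarith)
    have heq : (y + (sig n I J y - ε / 2) • bpt n I J) + (ε / 4) • bpt n I J
        = y + (sig n I J y - ε / 4) • bpt n I J := by
      rw [add_assoc, ← add_smul]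
      congr 2
      ring
    rw [heq, sig_lt_iff n I J hn hIJ] at this
    linarith
  have hP2 : IsOpen ((fun w : Fin (n-1) → ℝ => w + (sig n I J y - ε / 2) • bpt n I J) ⁻¹'
      (closure (setC n I J))ᶜ) :=
    (isClosed_closure).isOpen_compl.preimage (continuous_id.add continuous_const)
  obtain ⟨r2, hr2, hball2⟩ := Metric.isOpen_iff.mp hP2 y hnotmem
  refine ⟨min r1 r2, lt_min hr1 hr2, ?_⟩
  intro a ha
  have ha1 : a ∈ Metric.ball y r1 := Metric.ball_subset_ball (min_le_left r1 r2) ha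
  have ha2 : a ∈ Metric.ball y r2 := Metric.ball_subset_ball (min_le_right r1 r2) ha
  have hup : sig n I J a < sig n I J y + ε / 2 :=
    (sig_lt_iff n I J hn hIJ a _).mp (hball1 ha1)
  have hlow : sig n I J y - ε / 2 ≤ sig n I J a := by
    by_contra hcon
    push_neg at hcon
    have := (sig_lt_iff n I J hn hIJ a _).mpr hcon
    exact (hball2 ha2) (subset_closure this)
  rw [Real.dist_eq, abs_sub_lt_iff]
  constructor <;> linarith

end Stmt5
namespace Stmt5

theorem mem_IntD_iff (m : ℕ) (y : Fin m → ℝ) : y ∈ IntD m ↔ ‖y‖ < 1 := by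
  rw [pi_norm_lt_iff (zero_lt_one)]
  simp only [IntD, Set.mem_setOf_eq, Set.mem_Ioo, Real.norm_eq_abs, abs_lt]

theorem coeff_cancel (n : ℕ) (I J : Finset (Fin n)) (y : Fin (n - 1) → ℝ) (c d : ℝ)
    (h : c + d = 0) : y + c • bpt n I J + d • bpt n I J = y := by
  rw [add_assoc, ← add_smul, h, zero_smul, add_zero]

theorem homeoA (n : ℕ) (I J : Finset (Fin n)) :
    Nonempty ((setAIJ n I J) ≃ₜ (setC n I J)) := by
  have hIntD : ∀ p : setAIJ n I J, ‖(p : Fin (n-1) → ℝ)‖ < 1 :=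
    fun p => (mem_IntD_iff _ _).mp p.2.1
  have hpos1 : ∀ p : setAIJ n I J, (0:ℝ) < 1 - ‖(p : Fin (n-1) → ℝ)‖ :=
    fun p => by have := hIntD p; linarith
  have hpos2 : ∀ z : Fin (n-1) → ℝ, (0:ℝ) < 1 + ‖z‖ :=
    fun z => by have := norm_nonneg z; linarith
  refine ⟨{
    toFun := fun p => ⟨(1 - ‖(p : Fin (n-1) → ℝ)‖)⁻¹ • (p : Fin (n-1) → ℝ),
      smul_mem_setC (inv_pos.mpr (hpos1 p)) p.2.2⟩
    invFun := fun z => ⟨(1 + ‖(z : Fin (n-1) → ℝ)‖)⁻¹ • (z : Fin (n-1) → ℝ), ?_, ?_⟩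
    left_inv := ?_
    right_inv := ?_
    continuous_toFun := ?_
    continuous_invFun := ?_ }⟩
  · -- IntD membership of invFun
    rw [mem_IntD_iff, norm_smul, norm_inv, Real.norm_eq_abs, abs_of_pos (hpos2 _),
      inv_mul_lt_iff₀ (hpos2 _)]
    have := norm_nonneg (z : Fin (n-1) → ℝ)
    linarith
  · exact smul_mem_setC (inv_pos.mpr (hpos2 _)) z.2
  · -- left_inv
    intro p
    apply Subtype.ext
    have hpos := hpos1 p
    show (1 + ‖(1 - ‖(p : Fin (n-1) → ℝ)‖)⁻¹ • (p : Fin (n-1) → ℝ)‖)⁻¹ •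
      ((1 - ‖(p : Fin (n-1) → ℝ)‖)⁻¹ • (p : Fin (n-1) → ℝ)) = (p : Fin (n-1) → ℝ)
    rw [norm_smul, norm_inv, Real.norm_eq_abs, abs_of_pos hpos, smul_smul, ← mul_inv,
      show (1 + (1 - ‖(p : Fin (n-1) → ℝ)‖)⁻¹ * ‖(p : Fin (n-1) → ℝ)‖) *
        (1 - ‖(p : Fin (n-1) → ℝ)‖) = 1 from by field_simp; ring, inv_one, one_smul]
  · -- right_inv
    intro z
    apply Subtype.ext
    have hpos := hpos2 (z : Fin (n-1) → ℝ)
    have hnn : (0:ℝ) ≤ ‖(z : Fin (n-1) → ℝ)‖ := norm_nonneg _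
    show (1 - ‖(1 + ‖(z : Fin (n-1) → ℝ)‖)⁻¹ • (z : Fin (n-1) → ℝ)‖)⁻¹ •
      ((1 + ‖(z : Fin (n-1) → ℝ)‖)⁻¹ • (z : Fin (n-1) → ℝ)) = (z : Fin (n-1) → ℝ)
    rw [norm_smul, norm_inv, Real.norm_eq_abs, abs_of_pos hpos, smul_smul, ← mul_inv,
      show (1 - (1 + ‖(z : Fin (n-1) → ℝ)‖)⁻¹ * ‖(z : Fin (n-1) → ℝ)‖) *
        (1 + ‖(z : Fin (n-1) → ℝ)‖) = 1 from by field_simp; ring, inv_one, one_smul]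
  · -- continuous_toFun
    apply Continuous.subtype_mk
    exact ((continuous_const.sub continuous_subtype_val.norm).inv₀
      (fun p => (hpos1 p).ne')).smul continuous_subtype_val
  · -- continuous_invFun
    apply Continuous.subtype_mk
    exact ((continuous_const.add continuous_subtype_val.norm).inv₀
      (fun z => (hpos2 _).ne')).smul continuous_subtype_val

theorem homeoC (n : ℕ) (I J : Finset (Fin n)) (hn : 2 ≤ n) (hIJ : memO n I J) :
    Nonempty ((setC n I J) ≃ₜ (Fin (n - 1) → ℝ)) := by
  obtain ⟨i0, hi0⟩ := hIJ.1
  obtain ⟨j0, hj0⟩ := hIJ.2.1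
  set f : (Fin (n - 1) → ℝ) → ℝ := fun y => 2 * (ydot n y j0 - ydot n y i0) with hf
  have hfadd : ∀ (y : Fin (n-1) → ℝ) (s : ℝ), f (y + s • bpt n I J) = f y + s :=
    fun y s => f_add n I J hn hIJ hi0 hj0 y s
  have hfcont : Continuous f := by
    apply continuous_const.mul
    exact ((continuous_apply j0).comp (continuous_ydot n)).sub
      ((continuous_apply i0).comp (continuous_ydot n))
  have hσcont : Continuous (sig n I J) := sig_continuous n I J hn hIJ
  have hσneg : ∀ p : setC n I J, sig n I J (p : Fin (n-1) → ℝ) < 0 :=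
    fun p => (mem_setC_iff_sig_neg n I J hn hIJ _).mp p.2
  refine ⟨{
    toFun := fun p => (p : Fin (n-1) → ℝ) +
      (Real.log (-(sig n I J (p : Fin (n-1) → ℝ))) - f (p : Fin (n-1) → ℝ)) • bpt n I J
    invFun := fun z => ⟨z + (sig n I J z + Real.exp (f z)) • bpt n I J, ?_⟩
    left_inv := ?_
    right_inv := ?_
    continuous_toFun := ?_
    continuous_invFun := ?_ }⟩
  · -- membership
    rw [mem_setC_iff_sig_neg n I J hn hIJ, sig_translate n I J hn hIJ]
    have := Real.exp_pos (f z)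
    linarith
  · -- left_inv
    intro p
    apply Subtype.ext
    show ((p : Fin (n-1) → ℝ) +
        (Real.log (-(sig n I J (p : Fin (n-1) → ℝ))) - f (p : Fin (n-1) → ℝ)) • bpt n I J) +
      (sig n I J ((p : Fin (n-1) → ℝ) +
        (Real.log (-(sig n I J (p : Fin (n-1) → ℝ))) - f (p : Fin (n-1) → ℝ)) • bpt n I J) +
       Real.exp (f ((p : Fin (n-1) → ℝ) +
        (Real.log (-(sig n I J (p : Fin (n-1) → ℝ))) - f (p : Fin (n-1) → ℝ)) • bpt n I J))) •
          bpt n I J = (p : Fin (n-1) → ℝ)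
    rw [sig_translate n I J hn hIJ, hfadd]
    rw [show f (p : Fin (n-1) → ℝ) + (Real.log (-(sig n I J (p : Fin (n-1) → ℝ))) -
        f (p : Fin (n-1) → ℝ)) = Real.log (-(sig n I J (p : Fin (n-1) → ℝ))) from by ring]
    rw [Real.exp_log (by have := hσneg p; linarith)]
    exact coeff_cancel n I J _ _ _ (by ring)
  · -- right_inv
    intro z
    show ((z + (sig n I J z + Real.exp (f z)) • bpt n I J) +
      (Real.log (-(sig n I J (z + (sig n I J z + Real.exp (f z)) • bpt n I J))) -
        f (z + (sig n I J z + Real.exp (f z)) • bpt n I J)) • bpt n I J) = z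
    rw [sig_translate n I J hn hIJ, hfadd]
    rw [show sig n I J z - (sig n I J z + Real.exp (f z)) = -(Real.exp (f z)) from by ring,
      neg_neg, Real.log_exp]
    exact coeff_cancel n I J _ _ _ (by ring)
  · -- continuous_toFun
    have hlog : Continuous (fun p : setC n I J =>
        Real.log (-(sig n I J (p : Fin (n-1) → ℝ)))) := by
      rw [continuous_iff_continuousAt]
      intro p
      exact (Real.continuousAt_log (ne_of_gt (by have := hσneg p; linarith))).comp
        ((hσcont.comp continuous_subtype_val).neg.continuousAt)
    exact continuous_subtype_val.add
      ((hlog.sub (hfcont.comp continuous_subtype_val)).smul continuous_const)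
  · -- continuous_invFun
    apply Continuous.subtype_mk
    exact continuous_id.add
      ((hσcont.add (Real.continuous_exp.comp hfcont)).smul continuous_const)

end Stmt5

/-- For each `(I,J) ∈ O`, the subspace `A_{I,J}` of `ℝ^{n-1}` is homeomorphic to `ℝ^{n-1}`. -/
theorem stmt_5 (n : ℕ) (hn : 2 ≤ n) (I J : Finset (Fin n)) (hIJ : memO n I J) :
    Nonempty ((setAIJ n I J) ≃ₜ (Fin (n - 1) → ℝ)) := by
  obtain ⟨e1⟩ := Stmt5.homeoA n I J
  obtain ⟨e2⟩ := Stmt5.homeoC n I J hn hIJ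
  exact ⟨e1.trans e2⟩
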